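/- Assume N₊ ≥ 1 and N₋ ≥ 1. Then (i) an element ω ∈ Ω satisfies dω = 0 if and only if ω ∼ a₀₀ + ψ₁a₁₀ + χ₁a₀₁ + ψ₁χ₁a₁₁ for some polynomials a₀₀, a₁₀, a₀₁, a₁₁ lying in the subring ℂ[ψ₂,…,ψ_{N₊}, χ₂,…,χ_{N₋}] of R (complex constants when N₊ = N₋ = 1); and (ii) a₀₀ + ψ₁a₁₀ + χ₁a₀₁ + ψ₁χ₁a₁₁ ∼ 0 for such coefficients if and only if a₀₀ = a₁₀ = a₀₁ = a₁₁ = 0. -/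

import Mathlib

noncomputable section AuxPoly
open Polynomial

lemma deg_lemma {D : Type*} [CommRing D] [IsDomain D] {m L w : D[X]} (hm : m.Monic)
    (hL : L.degree < m.degree) (h : L = m * w) : w = 0 ∧ L = 0 := by
  rcases eq_or_ne w 0 with rfl | hw
  · simp [h]
  · exfalso
    rw [h, degree_mul] at hL
    have h0 : (0:WithBot ℕ) ≤ w.degree := zero_le_degree_iff.2 hw
    have : m.degree + 0 ≤ m.degree + w.degree := add_le_add_right h0 _
    simp only [add_zero] at this
    exact absurd (lt_of_le_of_lt this hL) (lt_irrefl _)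

lemma main_div {D : Type*} [CommRing D] [IsDomain D] {m : D[X]} (hm : m.Monic) {c : D}
    (hc : c ≠ 0) {u v L : D[X]} (hL : L.degree < m.degree) (h : C c * u + m * v = L) :
    L = C c * (u %ₘ m) ∧ u = m * (u /ₘ m) + u %ₘ m ∧ v = -(C c * (u /ₘ m)) := by
  have hu : u %ₘ m + m * (u /ₘ m) = u := modByMonic_add_div u m
  have key : L - C c * (u %ₘ m) = m * (v + C c * (u /ₘ m)) := by
    linear_combination -h - C c * hu
  have hdeg : (L - C c * (u %ₘ m)).degree < m.degree := by
    apply lt_of_le_of_lt (degree_sub_le _ _)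
    rw [max_lt_iff]
    refine ⟨hL, ?_⟩
    rw [degree_mul, degree_C hc, zero_add]
    exact degree_modByMonic_lt u hm
  obtain ⟨h1, h2⟩ := deg_lemma hm hdeg key
  refine ⟨by linear_combination h2, by linear_combination -hu, by linear_combination h1⟩

lemma lt_two_le_one {n : WithBot ℕ} (h : n < 2) : n ≤ 1 := by
  rcases eq_or_ne n ⊥ with rfl | hb
  · exact bot_le
  · lift n to ℕ using hb
    rw [← Nat.cast_withBot] at h ⊢
    have h2 : (n : ℕ) < 2 := by exact_mod_cast h
    have h3 : (n : ℕ) ≤ 1 := by omega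
    exact_mod_cast h3

section
variable {D : Type*} [CommRing D] [IsDomain D]

lemma xsqC_monic (a : D) : (X ^ 2 + C a : D[X]).Monic :=
  monic_X_pow_add (lt_of_le_of_lt degree_C_le (by norm_num))

lemma xsqC_deg (a : D) : (X ^ 2 + C a : D[X]).degree = 2 :=
  degree_X_pow_add_C (by norm_num) a

lemma decomp2 {m : D[X]} (hm : m.Monic) (hdeg : m.degree = 2) (w : D[X]) :
    ∃ a b d, w = C a + C b * X + m * d := by
  refine ⟨(w %ₘ m).coeff 0, (w %ₘ m).coeff 1, w /ₘ m, ?_⟩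
  have e1 : w %ₘ m + m * (w /ₘ m) = w := modByMonic_add_div w m
  have e2 : w %ₘ m = C ((w %ₘ m).coeff 1) * X + C ((w %ₘ m).coeff 0) :=
    eq_X_add_C_of_degree_le_one (lt_two_le_one (hdeg ▸ degree_modByMonic_lt w hm))
  linear_combination -e1 + e2

lemma core1 (p q : D) (u v : D[X][X])
    (h : C (X ^ 2 + C p) * u + (X ^ 2 + C (C q)) * v = 0) :
    ∃ s, u = (X ^ 2 + C (C q)) * s ∧ v = -(C (X ^ 2 + C p) * s) := by
  have hQm : (X ^ 2 + C (C q) : D[X][X]).Monic := xsqC_monic _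
  have hPb : (X ^ 2 + C p : D[X]) ≠ 0 := (xsqC_monic p).ne_zero
  have hL : (0 : D[X][X]).degree < (X ^ 2 + C (C q) : D[X][X]).degree := by
    rw [degree_zero, xsqC_deg]; exact bot_lt_iff_ne_bot.2 (by simp)
  obtain ⟨h1, h2, h3⟩ := main_div hQm hPb hL h
  have hmod : u %ₘ (X ^ 2 + C (C q)) = 0 := by
    rcases mul_eq_zero.1 h1.symm with h' | h'
    · exact absurd (C_eq_zero.1 h') hPb
    · exact h'
  refine ⟨u /ₘ (X ^ 2 + C (C q)), ?_, h3⟩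
  nth_rewrite 1 [h2]
  rw [hmod, add_zero]

lemma core2 (p q : D) (r : D[X][X]) :
    ∃ a00 a10 a01 a11 : D, ∃ u v : D[X][X],
      r = C (C a00) + C X * C (C a10) + X * C (C a01) + C X * X * C (C a11)
        + C (X ^ 2 + C p) * u + (X ^ 2 + C (C q)) * v := by
  obtain ⟨w0, w1, dq, e0⟩ := decomp2 (xsqC_monic (C q)) (xsqC_deg (C q)) r
  obtain ⟨a0, b0, d0, e1⟩ := decomp2 (xsqC_monic p) (xsqC_deg p) w0
  obtain ⟨a1, b1, d1, e2⟩ := decomp2 (xsqC_monic p) (xsqC_deg p) w1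
  refine ⟨a0, b0, a1, b1, C d0 + C d1 * X, dq, ?_⟩
  rw [e0, e1, e2]
  simp only [map_add, map_mul]
  ring

lemma linear_eq_zero {a b : D} (h : C a * X + C b = (0 : D[X])) : a = 0 ∧ b = 0 := by
  constructor
  · have := congrArg (fun z : D[X] => z.coeff 1) h
    simpa using this
  · have := congrArg (fun z : D[X] => z.coeff 0) h
    simpa using this

lemma linear_eq {a b a' b' : D} (h : C a * X + C b = C a' * X + C b') : a = a' ∧ b = b' := by
  have h0 : C (a - a') * X + C (b - b') = (0 : D[X]) := by
    simp only [map_sub]; linear_combination h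
  obtain ⟨h1, h2⟩ := linear_eq_zero h0
  exact ⟨by linear_combination h1, by linear_combination h2⟩

lemma core3 (p q : D) (a00 a10 a01 a11 : D) (u v : D[X][X])
    (h : C (C a00) + C X * C (C a10) + X * C (C a01) + C X * X * C (C a11)
      = C (X ^ 2 + C p) * u + (X ^ 2 + C (C q)) * v) :
    a00 = 0 ∧ a10 = 0 ∧ a01 = 0 ∧ a11 = 0 := by
  have hQm : (X ^ 2 + C (C q) : D[X][X]).Monic := xsqC_monic _
  have hPm : (X ^ 2 + C p : D[X]).Monic := xsqC_monic p
  have hPb : (X ^ 2 + C p : D[X]) ≠ 0 := hPm.ne_zero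
  set l0 : D[X] := C a10 * X + C a00 with hl0
  set l1 : D[X] := C a11 * X + C a01 with hl1
  set L : D[X][X] := C l1 * X + C l0 with hLdef
  have hLform : C (C a00) + C X * C (C a10) + X * C (C a01) + C X * X * C (C a11) = L := by
    rw [hLdef, hl0, hl1]; simp only [map_add, map_mul]; ring
  rw [hLform] at h
  have hLdeg : L.degree < (X ^ 2 + C (C q) : D[X][X]).degree := by
    rw [xsqC_deg]
    exact lt_of_le_of_lt degree_linear_le (by norm_num)
  obtain ⟨h1, -, -⟩ := main_div hQm hPb hLdeg h.symm
  set w := u %ₘ (X ^ 2 + C (C q)) with hwdef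
  have hwdeg : w.degree ≤ 1 := lt_two_le_one (by
    rw [← xsqC_deg (C q : D[X])]; exact degree_modByMonic_lt u hQm)
  have hwform : w = C (w.coeff 1) * X + C (w.coeff 0) := eq_X_add_C_of_degree_le_one hwdeg
  rw [hwform] at h1
  have h1' : C l1 * X + C l0
      = C ((X ^ 2 + C p) * w.coeff 1) * X + C ((X ^ 2 + C p) * w.coeff 0) := by
    rw [hLdef] at h1
    simp only [map_mul]
    linear_combination h1
  obtain ⟨e1, e0⟩ := linear_eq h1'
  have hd0 : l0.degree < (X ^ 2 + C p : D[X]).degree := by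
    rw [xsqC_deg, hl0]
    exact lt_of_le_of_lt degree_linear_le (by norm_num)
  have hd1 : l1.degree < (X ^ 2 + C p : D[X]).degree := by
    rw [xsqC_deg, hl1]
    exact lt_of_le_of_lt degree_linear_le (by norm_num)
  obtain ⟨-, hz0⟩ := deg_lemma hPm hd0 e0
  obtain ⟨-, hz1⟩ := deg_lemma hPm hd1 e1
  obtain ⟨g10, g00⟩ := linear_eq_zero (hl0 ▸ hz0)
  obtain ⟨g11, g01⟩ := linear_eq_zero (hl1 ▸ hz1)
  exact ⟨g00, g10, g01, g11⟩
end

section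
variable {D : Type*} [CommRing D] [IsDomain D]

lemma expandC (p : D) : (C (X ^ 2 + C p) : D[X][X]) = C X ^ 2 + C (C p) := by
  rw [map_add, map_pow]

lemma core1' (p q : D) (u v : D[X][X])
    (h : (C X ^ 2 + C (C p)) * u + (X ^ 2 + C (C q)) * v = 0) :
    ∃ s, u = (X ^ 2 + C (C q)) * s ∧ v = -((C X ^ 2 + C (C p)) * s) := by
  rw [← expandC] at h
  obtain ⟨s, h1, h2⟩ := core1 p q u v h
  rw [← expandC]
  exact ⟨s, h1, h2⟩

lemma core2' (p q : D) (r : D[X][X]) :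
    ∃ a00 a10 a01 a11 : D, ∃ u v : D[X][X],
      r = C (C a00) + C X * C (C a10) + X * C (C a01) + C X * X * C (C a11)
        + (C X ^ 2 + C (C p)) * u + (X ^ 2 + C (C q)) * v := by
  obtain ⟨a00, a10, a01, a11, u, v, h⟩ := core2 p q r
  rw [expandC] at h
  exact ⟨a00, a10, a01, a11, u, v, h⟩

lemma core3' (p q : D) (a00 a10 a01 a11 : D) (u v : D[X][X])
    (h : C (C a00) + C X * C (C a10) + X * C (C a01) + C X * X * C (C a11)
      = (C X ^ 2 + C (C p)) * u + (X ^ 2 + C (C q)) * v) :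
    a00 = 0 ∧ a10 = 0 ∧ a01 = 0 ∧ a11 = 0 := by
  rw [← expandC] at h
  exact core3 p q a00 a10 a01 a11 u v h
end

end AuxPoly

noncomputable section AuxIso
open MvPolynomial

def eqv (a b : ℕ) : (Fin (a+1) ⊕ Fin (b+1)) ≃ Option (Option (Fin a ⊕ Fin b)) where
  toFun v :=
    Sum.elim
      (fun i => Fin.cases (some none) (fun j => some (some (Sum.inl j))) i)
      (fun i => Fin.cases none (fun j => some (some (Sum.inr j))) i) v
  invFun o :=
    match o with
    | none => Sum.inr 0
    | some none => Sum.inl 0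
    | some (some (Sum.inl j)) => Sum.inl j.succ
    | some (some (Sum.inr j)) => Sum.inr j.succ
  left_inv := by
    rintro (i | i) <;> induction i using Fin.cases <;> simp
  right_inv := by
    rintro (_ | _ | (j | j)) <;> simp

abbrev Amod (a b : ℕ) := MvPolynomial (Fin a ⊕ Fin b) ℂ

def phi (a b : ℕ) : MvPolynomial (Fin (a+1) ⊕ Fin (b+1)) ℂ ≃ₐ[ℂ]
    Polynomial (Polynomial (Amod a b)) :=
  (renameEquiv ℂ (eqv a b)).trans ((optionEquivLeft ℂ _).trans
    (Polynomial.mapAlgEquiv (optionEquivLeft ℂ _)))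

lemma phi_psi0 (a b : ℕ) : phi a b (X (Sum.inl 0)) = Polynomial.C Polynomial.X := by
  simp [phi, eqv, optionEquivLeft_X_some, optionEquivLeft_X_none,
    Polynomial.coe_mapAlgEquiv]

lemma phi_chi0 (a b : ℕ) : phi a b (X (Sum.inr 0)) = Polynomial.X := by
  simp [phi, eqv, optionEquivLeft_X_none, Polynomial.coe_mapAlgEquiv]

lemma phi_rename (a b : ℕ) (y : Amod a b) :
    phi a b (rename (Sum.map Fin.succ Fin.succ) y)
      = Polynomial.C (Polynomial.C y) := by
  have key : ((phi a b).toAlgHom.comp (rename (Sum.map Fin.succ Fin.succ)))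
      = (Polynomial.CAlgHom.comp Polynomial.CAlgHom : Amod a b →ₐ[ℂ] _) := by
    apply MvPolynomial.algHom_ext
    rintro (i | i) <;>
      simp [phi, eqv, optionEquivLeft_X_some, Polynomial.coe_mapAlgEquiv,
        Polynomial.CAlgHom]
  exact DFunLike.congr_fun key y

lemma range_summap (a b : ℕ) (hp : 0 < a+1) (hm : 0 < b+1) :
    Set.range (Sum.map (Fin.succ : Fin a → Fin (a+1)) (Fin.succ : Fin b → Fin (b+1)))
      = {v : Fin (a+1) ⊕ Fin (b+1) | v ≠ Sum.inl ⟨0, hp⟩ ∧ v ≠ Sum.inr ⟨0, hm⟩} := by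
  ext v
  constructor
  · rintro ⟨(j | j), rfl⟩ <;>
      simp [Fin.succ_ne_zero, Fin.mk_zero]
  · rintro ⟨h1, h2⟩
    rcases v with i | i
    · obtain ⟨j, rfl⟩ := Fin.eq_succ_of_ne_zero (by simpa [Fin.mk_zero] using h1)
      exact ⟨Sum.inl j, rfl⟩
    · obtain ⟨j, rfl⟩ := Fin.eq_succ_of_ne_zero (by simpa [Fin.mk_zero] using h2)
      exact ⟨Sum.inr j, rfl⟩

lemma mem_supported_iff (a b : ℕ) (hp : 0 < a+1) (hm : 0 < b+1)
    (x : MvPolynomial (Fin (a+1) ⊕ Fin (b+1)) ℂ) :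
    x ∈ MvPolynomial.supported ℂ
        {v : Fin (a+1) ⊕ Fin (b+1) | v ≠ Sum.inl ⟨0, hp⟩ ∧ v ≠ Sum.inr ⟨0, hm⟩}
      ↔ ∃ y, x = rename (Sum.map Fin.succ Fin.succ) y := by
  rw [mem_supported, ← range_summap a b hp hm]
  constructor
  · intro h
    obtain ⟨y, hy⟩ := exists_rename_eq_of_vars_subset_range x
      (Sum.map Fin.succ Fin.succ)
      (Function.Injective.sumMap (Fin.succ_injective a) (Fin.succ_injective b)) h
    exact ⟨y, hy.symm⟩
  · rintro ⟨y, rfl⟩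
    intro v hv
    have := vars_rename (Sum.map Fin.succ Fin.succ) y (Finset.mem_coe.1 hv)
    simp only [Finset.mem_image] at this
    obtain ⟨w, -, rfl⟩ := this
    exact ⟨w, rfl⟩

def pA (a b : ℕ) : Amod a b := ∑ i : Fin a, X (Sum.inl i) ^ 2
def qA (a b : ℕ) : Amod a b := ∑ i : Fin b, X (Sum.inr i) ^ 2

lemma phi_P (a b : ℕ) :
    phi a b (∑ i : Fin (a+1), X (Sum.inl i) ^ 2)
      = Polynomial.C (Polynomial.X ^ 2 + Polynomial.C (pA a b)) := by
  rw [Fin.sum_univ_succ]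
  have hren : (∑ i : Fin a, (X (Sum.inl i.succ) : MvPolynomial (Fin (a+1) ⊕ Fin (b+1)) ℂ) ^ 2)
      = rename (Sum.map Fin.succ Fin.succ) (pA a b) := by
    rw [pA, map_sum]
    simp [rename_X]
  rw [map_add, map_sum]
  simp only [map_pow, phi_psi0]
  rw [show (∑ i : Fin a, phi a b (X (Sum.inl i.succ)) ^ 2)
      = phi a b (∑ i : Fin a, X (Sum.inl i.succ) ^ 2) by rw [map_sum]; simp [map_pow],
    hren, phi_rename]
  rw [map_add, map_pow]

lemma phi_Q (a b : ℕ) :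
    phi a b (∑ i : Fin (b+1), X (Sum.inr i) ^ 2)
      = Polynomial.X ^ 2 + Polynomial.C (Polynomial.C (qA a b)) := by
  rw [Fin.sum_univ_succ]
  have hren : (∑ i : Fin b, (X (Sum.inr i.succ) : MvPolynomial (Fin (a+1) ⊕ Fin (b+1)) ℂ) ^ 2)
      = rename (Sum.map Fin.succ Fin.succ) (qA a b) := by
    rw [qA, map_sum]
    simp [rename_X]
  rw [map_add, map_sum]
  simp only [map_pow, phi_chi0]
  rw [show (∑ i : Fin b, phi a b (X (Sum.inr i.succ)) ^ 2)
      = phi a b (∑ i : Fin b, X (Sum.inr i.succ) ^ 2) by rw [map_sum]; simp [map_pow],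
    hren, phi_rename]

end AuxIso



/-!
D = 2, signature (1,1) supersymmetry algebra cohomology.
`R2 Np Nm = ℂ[ψ₁,…,ψ_{N₊}, χ₁,…,χ_{N₋}]`, `Om2` is the free module with basis
`{1, c̃₁, c̃₂, c̃₁c̃₂}`, and `d2` is the differential with `dc̃₁ = P`, `dc̃₂ = Q`.
-/

open MvPolynomial

noncomputable section

/-- The polynomial ring `ℂ[ψ₁,…,ψ_{N₊}, χ₁,…,χ_{N₋}]`; `Sum.inl i ↦ ψᵢ`, `Sum.inr i ↦ χᵢ`. -/
abbrev R2 (Np Nm : ℕ) : Type := MvPolynomial (Fin Np ⊕ Fin Nm) ℂ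

/-- `Ω`: free `R2`-module with basis `{1, c̃₁, c̃₂, c̃₁c̃₂}` (components 0,1,2,3). -/
abbrev Om2 (Np Nm : ℕ) : Type := Fin 4 → R2 Np Nm

/-- The ghost `ψᵢ`. -/
def ψ {Np Nm : ℕ} (i : Fin Np) : R2 Np Nm := X (Sum.inl i)

/-- The ghost `χᵢ`. -/
def χ {Np Nm : ℕ} (i : Fin Nm) : R2 Np Nm := X (Sum.inr i)

/-- `P = Σ ψᵢ²`. -/
def Pp (Np Nm : ℕ) : R2 Np Nm := ∑ i, ψ i ^ 2

/-- `Q = Σ χᵢ²`. -/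
def Qq (Np Nm : ℕ) : R2 Np Nm := ∑ i, χ i ^ 2

/-- The differential `d(ω₀ + c̃₁ω₁ + c̃₂ω₂ + c̃₁c̃₂ω₃) = Pω₁ + Qω₂ + (Pc̃₂ − Qc̃₁)ω₃`. -/
def d2 {Np Nm : ℕ} (ω : Om2 Np Nm) : Om2 Np Nm :=
  ![Pp Np Nm * ω 1 + Qq Np Nm * ω 2, -(Qq Np Nm * ω 3), Pp Np Nm * ω 3, 0]

/-- Embedding of `R` into `Ω` (coefficient of the basis element `1`). -/
def ofR {Np Nm : ℕ} (r : R2 Np Nm) : Om2 Np Nm := ![r, 0, 0, 0]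

/-- `ω ∼ ω'` iff `ω − ω' = dρ` for some `ρ`. -/
def Equiv2 {Np Nm : ℕ} (ω ω' : Om2 Np Nm) : Prop := ∃ ρ, ω - ω' = d2 ρ

/-- The subring `ℂ[ψ₂,…,ψ_{N₊}, χ₂,…,χ_{N₋}]` of `R2 Np Nm`. -/
def coefRing (Np Nm : ℕ) (hp : 0 < Np) (hm : 0 < Nm) : Subalgebra ℂ (R2 Np Nm) :=
  MvPolynomial.supported ℂ
    {v : Fin Np ⊕ Fin Nm | v ≠ Sum.inl ⟨0, hp⟩ ∧ v ≠ Sum.inr ⟨0, hm⟩}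

/-- for `N₊ ≥ 1`, `N₋ ≥ 1`, (i) `dω = 0` iff
`ω ∼ a₀₀ + ψ₁a₁₀ + χ₁a₀₁ + ψ₁χ₁a₁₁` with coefficients in
`ℂ[ψ₂,…,ψ_{N₊}, χ₂,…,χ_{N₋}]`; (ii) such a combination is `∼ 0` iff all
coefficients vanish. -/
theorem stmt0 (Np Nm : ℕ) (hp : 0 < Np) (hm : 0 < Nm) :
    (∀ ω : Om2 Np Nm, d2 ω = 0 ↔
      ∃ a00 ∈ coefRing Np Nm hp hm, ∃ a10 ∈ coefRing Np Nm hp hm,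
      ∃ a01 ∈ coefRing Np Nm hp hm, ∃ a11 ∈ coefRing Np Nm hp hm,
        Equiv2 ω (ofR (a00 + ψ ⟨0, hp⟩ * a10 + χ ⟨0, hm⟩ * a01
          + ψ ⟨0, hp⟩ * χ ⟨0, hm⟩ * a11)))
    ∧
    (∀ a00 a10 a01 a11 : R2 Np Nm,
      a00 ∈ coefRing Np Nm hp hm → a10 ∈ coefRing Np Nm hp hm →
      a01 ∈ coefRing Np Nm hp hm → a11 ∈ coefRing Np Nm hp hm →
      (Equiv2 (ofR (a00 + ψ ⟨0, hp⟩ * a10 + χ ⟨0, hm⟩ * a01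
          + ψ ⟨0, hp⟩ * χ ⟨0, hm⟩ * a11)) 0 ↔
        a00 = 0 ∧ a10 = 0 ∧ a01 = 0 ∧ a11 = 0)) := by
  obtain ⟨a, rfl⟩ : ∃ a, Np = a + 1 := ⟨Np - 1, by omega⟩
  obtain ⟨b, rfl⟩ : ∃ c, Nm = c + 1 := ⟨Nm - 1, by omega⟩
  set Φ := phi a b with hΦdef
  have hinj : Function.Injective Φ := Φ.injective
  have hmem : ∀ x : R2 (a+1) (b+1), x ∈ coefRing (a+1) (b+1) hp hm ↔
      ∃ y, x = rename (Sum.map Fin.succ Fin.succ) y := by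
    intro x
    simp only [coefRing]
    exact mem_supported_iff a b hp hm x
  have hΦP : Φ (Pp (a+1) (b+1))
      = Polynomial.C Polynomial.X ^ 2 + Polynomial.C (Polynomial.C (pA a b)) := by
    rw [← expandC]
    simpa [Pp, ψ] using phi_P a b
  have hΦQ : Φ (Qq (a+1) (b+1)) = Polynomial.X ^ 2 + Polynomial.C (Polynomial.C (qA a b)) := by
    simpa [Qq, χ] using phi_Q a b
  have hΦψ : Φ (ψ ⟨0, hp⟩ : R2 (a+1) (b+1)) = Polynomial.C Polynomial.X := phi_psi0 a b
  have hΦχ : Φ (χ ⟨0, hm⟩ : R2 (a+1) (b+1)) = Polynomial.X := phi_chi0 a b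
  have hΦR : ∀ y : Amod a b, Φ (rename (Sum.map Fin.succ Fin.succ) y)
      = Polynomial.C (Polynomial.C y) := phi_rename a b
  have hΦL : ∀ y00 y10 y01 y11 : Amod a b,
      Φ (rename (Sum.map Fin.succ Fin.succ) y00
        + ψ ⟨0, hp⟩ * rename (Sum.map Fin.succ Fin.succ) y10
        + χ ⟨0, hm⟩ * rename (Sum.map Fin.succ Fin.succ) y01
        + ψ ⟨0, hp⟩ * χ ⟨0, hm⟩ * rename (Sum.map Fin.succ Fin.succ) y11)
      = Polynomial.C (Polynomial.C y00)
        + Polynomial.C Polynomial.X * Polynomial.C (Polynomial.C y10)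
        + Polynomial.X * Polynomial.C (Polynomial.C y01)
        + Polynomial.C Polynomial.X * Polynomial.X * Polynomial.C (Polynomial.C y11) := by
    intro y00 y10 y01 y11
    simp only [map_add, map_mul, hΦψ, hΦχ, hΦR]
  have hP0 : Pp (a+1) (b+1) ≠ 0 := by
    intro h
    have h' := hΦP
    rw [h, map_zero] at h'
    rw [← expandC] at h'
    exact (Polynomial.Monic.ne_zero (xsqC_monic (pA a b))) (Polynomial.C_eq_zero.1 h'.symm)
  constructor
  · -- part (i)
    intro ω
    constructor
    · intro hd
      have h0 : Pp (a+1) (b+1) * ω 1 + Qq (a+1) (b+1) * ω 2 = 0 := congrFun hd 0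
      have h2 : Pp (a+1) (b+1) * ω 3 = 0 := congrFun hd 2
      have hω3 : ω 3 = 0 := by
        rcases mul_eq_zero.1 h2 with h | h
        · exact absurd h hP0
        · exact h
      have hΦeq : (Polynomial.C Polynomial.X ^ 2 + Polynomial.C (Polynomial.C (pA a b))) * Φ (ω 1)
          + (Polynomial.X ^ 2 + Polynomial.C (Polynomial.C (qA a b))) * Φ (ω 2) = 0 := by
        rw [← hΦP, ← hΦQ, ← map_mul, ← map_mul, ← map_add, h0, map_zero]
      obtain ⟨s, hs1, hs2⟩ := core1' (pA a b) (qA a b) (Φ (ω 1)) (Φ (ω 2)) hΦeq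
      obtain ⟨y00, y10, y01, y11, u, v, hcan⟩ := core2' (pA a b) (qA a b) (Φ (ω 0))
      refine ⟨rename (Sum.map Fin.succ Fin.succ) y00, (hmem _).2 ⟨y00, rfl⟩,
        rename (Sum.map Fin.succ Fin.succ) y10, (hmem _).2 ⟨y10, rfl⟩,
        rename (Sum.map Fin.succ Fin.succ) y01, (hmem _).2 ⟨y01, rfl⟩,
        rename (Sum.map Fin.succ Fin.succ) y11, (hmem _).2 ⟨y11, rfl⟩,
        ![0, Φ.symm u, Φ.symm v, -Φ.symm s], ?_⟩
      have c0 : ω 0 - (rename (Sum.map Fin.succ Fin.succ) y00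
            + ψ ⟨0, hp⟩ * rename (Sum.map Fin.succ Fin.succ) y10
            + χ ⟨0, hm⟩ * rename (Sum.map Fin.succ Fin.succ) y01
            + ψ ⟨0, hp⟩ * χ ⟨0, hm⟩ * rename (Sum.map Fin.succ Fin.succ) y11)
          = Pp (a+1) (b+1) * Φ.symm u + Qq (a+1) (b+1) * Φ.symm v := by
        apply hinj
        simp only [map_sub, map_add, map_mul, hΦψ, hΦχ, hΦR, hΦP, hΦQ,
          AlgEquiv.apply_symm_apply]
        linear_combination hcan
      have c1 : ω 1 - 0 = -(Qq (a+1) (b+1) * (-Φ.symm s)) := by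
        apply hinj
        simp only [map_sub, map_zero, map_neg, map_mul, hΦQ, AlgEquiv.apply_symm_apply]
        linear_combination hs1
      have c2 : ω 2 - 0 = Pp (a+1) (b+1) * (-Φ.symm s) := by
        apply hinj
        simp only [map_sub, map_zero, map_neg, map_mul, hΦP, AlgEquiv.apply_symm_apply]
        linear_combination hs2
      have c3 : ω 3 - 0 = 0 := by rw [hω3, sub_zero]
      funext i
      fin_cases i
      · exact c0
      · exact c1
      · exact c2
      · exact c3
    · rintro ⟨a00, -, a10, -, a01, -, a11, -, ρ, hρ⟩
      have h1 : ω 1 - 0 = -(Qq (a+1) (b+1) * ρ 3) := congrFun hρ 1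
      have h2 : ω 2 - 0 = Pp (a+1) (b+1) * ρ 3 := congrFun hρ 2
      have h3 : ω 3 - 0 = 0 := congrFun hρ 3
      have c0 : Pp (a+1) (b+1) * ω 1 + Qq (a+1) (b+1) * ω 2 = 0 := by
        linear_combination Pp (a+1) (b+1) * h1 + Qq (a+1) (b+1) * h2
      have c1 : -(Qq (a+1) (b+1) * ω 3) = 0 := by
        linear_combination -(Qq (a+1) (b+1)) * h3
      have c2 : Pp (a+1) (b+1) * ω 3 = 0 := by
        linear_combination Pp (a+1) (b+1) * h3
      funext i
      fin_cases i
      · exact c0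
      · exact c1
      · exact c2
      · rfl
  · -- part (ii)
    intro a00 a10 a01 a11 ha00 ha10 ha01 ha11
    obtain ⟨y00, rfl⟩ := (hmem _).1 ha00
    obtain ⟨y10, rfl⟩ := (hmem _).1 ha10
    obtain ⟨y01, rfl⟩ := (hmem _).1 ha01
    obtain ⟨y11, rfl⟩ := (hmem _).1 ha11
    constructor
    · rintro ⟨ρ, hρ⟩
      have h0 : (rename (Sum.map Fin.succ Fin.succ) y00
            + ψ ⟨0, hp⟩ * rename (Sum.map Fin.succ Fin.succ) y10
            + χ ⟨0, hm⟩ * rename (Sum.map Fin.succ Fin.succ) y01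
            + ψ ⟨0, hp⟩ * χ ⟨0, hm⟩ * rename (Sum.map Fin.succ Fin.succ) y11) - 0
          = Pp (a+1) (b+1) * ρ 1 + Qq (a+1) (b+1) * ρ 2 := congrFun hρ 0
      have hL : (rename (Sum.map Fin.succ Fin.succ) y00
            + ψ ⟨0, hp⟩ * rename (Sum.map Fin.succ Fin.succ) y10
            + χ ⟨0, hm⟩ * rename (Sum.map Fin.succ Fin.succ) y01
            + ψ ⟨0, hp⟩ * χ ⟨0, hm⟩ * rename (Sum.map Fin.succ Fin.succ) y11)
          = Pp (a+1) (b+1) * ρ 1 + Qq (a+1) (b+1) * ρ 2 := by linear_combination h0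
      have hΦ0 := congrArg Φ hL
      simp only [map_add, map_mul, hΦψ, hΦχ, hΦR, hΦP, hΦQ] at hΦ0
      obtain ⟨g00, g10, g01, g11⟩ := core3' (pA a b) (qA a b) y00 y10 y01 y11
        (Φ (ρ 1)) (Φ (ρ 2)) hΦ0
      refine ⟨?_, ?_, ?_, ?_⟩ <;> simp [g00, g10, g01, g11]
    · rintro ⟨h1, h2, h3, h4⟩
      rw [h1, h2, h3, h4]
      refine ⟨0, ?_⟩
      have c0 : ((0 : R2 (a+1) (b+1)) + ψ ⟨0, hp⟩ * 0 + χ ⟨0, hm⟩ * 0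
            + ψ ⟨0, hp⟩ * χ ⟨0, hm⟩ * 0) - 0
          = Pp (a+1) (b+1) * (0 : R2 (a+1) (b+1)) + Qq (a+1) (b+1) * 0 := by ring
      have c1 : (0 : R2 (a+1) (b+1)) - 0 = -(Qq (a+1) (b+1) * 0) := by ring
      have c2 : (0 : R2 (a+1) (b+1)) - 0 = Pp (a+1) (b+1) * 0 := by ring
      have c3 : (0 : R2 (a+1) (b+1)) - 0 = 0 := by ring
      funext i
      fin_cases i
      · exact c0
      · exact c1
      · exact c2
      · exact c3
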